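/- Let f : ℝ_+ → ℝ_+ be defined by f(x) = 4/(1 + e^{2−x}). Then f is a standard interference mapping with unique fixed point x* = 2, and for any starting point x₁ > 2 the fixed point iteration x_{n+1} = f(x_n) converges to 2 but not geometrically: for every c ∈ [0,1) and γ > 0 there exists n with |x_{n+1} − 2| > γ c^n. -/

import Mathlib

open Filter Topology Set

noncomputable def Mratio {k : ℕ} (x y : Fin k → ℝ) : ℝ :=
  sInf {β : ℝ | 0 < β ∧ ∀ i, x i ≤ β * y i}

noncomputable def dT {k : ℕ} (x y : Fin k → ℝ) : ℝ :=
  Real.log (max (Mratio x y) (Mratio y x))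

def posOrth (k : ℕ) : Set (Fin k → ℝ) := {x | ∀ i, 0 < x i}

def nonnegOrth (k : ℕ) : Set (Fin k → ℝ) := {x | ∀ i, 0 ≤ x i}

noncomputable def fmap (x : ℝ) : ℝ := 4 / (1 + Real.exp (2 - x))

/- ## Auxiliary lemmas -/

/-- `mfun t = t (1 + e^{2-t})`, the key auxiliary function. -/
noncomputable def mfun (t : ℝ) : ℝ := t * (1 + Real.exp (2 - t))

lemma mfun_hasDeriv (t : ℝ) :
    HasDerivAt mfun (1 + Real.exp (2 - t) - t * Real.exp (2 - t)) t := by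
  have h1 : HasDerivAt (fun t : ℝ => 2 - t) (-1) t := by
    exact (hasDerivAt_id t).const_sub (2:ℝ)
  have h2 : HasDerivAt (fun t : ℝ => Real.exp (2 - t)) (-Real.exp (2 - t)) t := by
    exact ((Real.hasDerivAt_exp (2 - t)).comp t h1).congr_deriv (by ring)
  have h3 : HasDerivAt (fun t : ℝ => 1 + Real.exp (2 - t)) (-Real.exp (2 - t)) t := by
    exact ((hasDerivAt_const t (1:ℝ)).add h2).congr_deriv (by ring)
  have h4 := (hasDerivAt_id t).mul h3
  have : (1 : ℝ) * (1 + Real.exp (2 - t)) + id t * -Real.exp (2 - t)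
      = 1 + Real.exp (2 - t) - t * Real.exp (2 - t) := by simp [id]; ring
  rw [this] at h4
  exact h4

lemma mfun_deriv_pos {t : ℝ} (ht : t ≠ 2) :
    0 < 1 + Real.exp (2 - t) - t * Real.exp (2 - t) := by
  have key : (t - 1) * Real.exp (2 - t) < 1 := by
    rcases le_or_gt t 1 with h | h
    · have : (t - 1) * Real.exp (2 - t) ≤ 0 :=
        mul_nonpos_of_nonpos_of_nonneg (by linarith) (Real.exp_pos _).le
      linarith
    · have h1 : t - 2 ≠ 0 := fun h' => ht (by linarith)
      have h2 : (t - 2) + 1 < Real.exp (t - 2) := Real.add_one_lt_exp h1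
      have h3 : Real.exp (2 - t) * Real.exp (t - 2) = 1 := by
        rw [← Real.exp_add]; norm_num
      have h4 : (t - 1) * Real.exp (2 - t) < Real.exp (t - 2) * Real.exp (2 - t) := by
        apply mul_lt_mul_of_pos_right _ (Real.exp_pos _)
        linarith
      calc (t - 1) * Real.exp (2 - t) < Real.exp (t - 2) * Real.exp (2 - t) := h4
        _ = 1 := by rw [mul_comm]; exact h3
  nlinarith [Real.exp_pos (2 - t)]

lemma mfun_strictMonoOn : StrictMonoOn mfun (Set.Ici (0:ℝ)) := by
  have hcont : Continuous mfun := by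
    unfold mfun; continuity
  have h1 : StrictMonoOn mfun (Set.Icc (0:ℝ) 2) := by
    apply strictMonoOn_of_deriv_pos (convex_Icc 0 2) hcont.continuousOn
    intro t ht
    rw [interior_Icc] at ht
    rw [(mfun_hasDeriv t).deriv]
    exact mfun_deriv_pos (ne_of_lt ht.2)
  have h2 : StrictMonoOn mfun (Set.Ici (2:ℝ)) := by
    apply strictMonoOn_of_deriv_pos (convex_Ici 2) hcont.continuousOn
    intro t ht
    rw [interior_Ici] at ht
    rw [(mfun_hasDeriv t).deriv]
    exact mfun_deriv_pos (ne_of_gt ht)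
  intro a ha b hb hab
  simp only [Set.mem_Ici] at ha hb
  rcases le_or_gt b 2 with h | h
  · exact h1 ⟨ha, hab.le.trans h⟩ ⟨hb, h⟩ hab
  · rcases le_or_gt 2 a with h' | h'
    · exact h2 h' h.le hab
    · calc mfun a < mfun 2 := h1 ⟨ha, h'.le⟩ ⟨by norm_num, le_rfl⟩ h'
        _ < mfun b := h2 (Set.mem_Ici.mpr le_rfl) h.le h

lemma one_add_exp_pos (x : ℝ) : 0 < 1 + Real.exp (2 - x) := by positivity

lemma fmap_pos (x : ℝ) : 0 < fmap x := by
  unfold fmap; positivity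

lemma fmap_strictMono : StrictMono fmap := by
  intro a b hab
  unfold fmap
  apply div_lt_div_of_pos_left (by norm_num) (one_add_exp_pos b)
  have := Real.exp_lt_exp.mpr (show 2 - b < 2 - a by linarith)
  linarith

lemma fmap_two : fmap 2 = 2 := by
  unfold fmap; norm_num

lemma fmap_gt_two {x : ℝ} (hx : 2 < x) : 2 < fmap x := by
  have := fmap_strictMono hx
  rwa [fmap_two] at this

lemma mfun_two : mfun 2 = 4 := by
  unfold mfun; norm_num

lemma fmap_lt_self {x : ℝ} (hx : 2 < x) : fmap x < x := by
  have hm : mfun 2 < mfun x :=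
    mfun_strictMonoOn (by norm_num) (by simp only [Set.mem_Ici]; linarith) hx
  rw [mfun_two] at hm
  unfold mfun at hm
  unfold fmap
  rw [div_lt_iff₀ (one_add_exp_pos x)]
  linarith

lemma fmap_fixed_unique {x : ℝ} (hx : 0 ≤ x) (hfix : fmap x = x) : x = 2 := by
  have h4 : mfun x = mfun 2 := by
    rw [mfun_two]
    unfold fmap at hfix
    unfold mfun
    have hpos := one_add_exp_pos x
    field_simp at hfix
    linarith
  exact mfun_strictMonoOn.injOn (Set.mem_Ici.mpr hx) (by norm_num) h4

lemma fmap_quad_lb {y : ℝ} (h0 : 0 ≤ y) (h1 : y ≤ 1) :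
    2 + (y - y ^ 2) ≤ fmap (2 + y) := by
  have hval : fmap (2 + y) = 4 / (1 + Real.exp (-y)) := by
    unfold fmap; ring_nf
  rw [hval]
  have hu : Real.exp (-y) ≤ 1 - y + y ^ 2 := by
    have habs : |(-y)| ≤ 1 := by rw [abs_neg, abs_of_nonneg h0]; exact h1
    have h' := (abs_le.mp (Real.abs_exp_sub_one_sub_id_le habs)).2
    nlinarith [sq_nonneg y]
  have hupos : 0 < Real.exp (-y) := Real.exp_pos _
  rw [le_div_iff₀ (by linarith)]
  nlinarith [sq_nonneg (y - y ^ 2),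
    mul_le_mul_of_nonneg_left hu (show (0:ℝ) ≤ 2 + y - y^2 by nlinarith)]

lemma exp_neg_two_le {t : ℝ} (h0 : 0 ≤ t) (h1 : t ≤ 1/2) :
    Real.exp (-(2 * t)) ≤ 1 - t := by
  have h2 : 1 + 2 * t ≤ Real.exp (2 * t) := by
    have := Real.add_one_le_exp (2 * t); linarith
  have h3 : Real.exp (-(2 * t)) = 1 / Real.exp (2 * t) := by
    rw [Real.exp_neg]; ring
  rw [h3]
  have h4 : 1 / Real.exp (2 * t) ≤ 1 / (1 + 2 * t) :=
    one_div_le_one_div_of_le (by linarith) h2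
  have h5 : 1 / (1 + 2 * t) ≤ 1 - t := by
    rw [div_le_iff₀ (by linarith)]; nlinarith
  linarith

lemma fmap_continuous : Continuous fmap := by
  unfold fmap
  apply Continuous.div continuous_const
  · continuity
  · intro x; positivity

lemma geom_sum_bound {c : ℝ} (hc0 : 0 ≤ c) (hc1 : c < 1) (n : ℕ) :
    ∑ k ∈ Finset.range n, c ^ k ≤ 1 / (1 - c) := by
  rw [geom_sum_eq (ne_of_lt hc1) n]
  have heq : (c ^ n - 1) / (c - 1) = (1 - c ^ n) / (1 - c) := by
    rw [← neg_div_neg_eq]; ring_nf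
  rw [heq]
  gcongr
  all_goals nlinarith [pow_nonneg hc0 n]

/-- Example 2 of Feyzmahdavian et al.: fmap is a standard interference
mapping with unique fixed point 2, and the fixed point iteration started above 2
converges to 2 but not geometrically. -/
theorem stmt13 :
    (∀ x y : ℝ, 0 ≤ x → x ≤ y → fmap x ≤ fmap y) ∧
    (∀ x : ℝ, 0 ≤ x → ∀ l : ℝ, 1 < l → fmap (l * x) < l * fmap x) ∧
    fmap 2 = 2 ∧
    (∀ x : ℝ, 0 ≤ x → fmap x = x → x = 2) ∧
    (∀ x : ℕ → ℝ, 2 < x 0 → (∀ n, x (n + 1) = fmap (x n)) →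
      Tendsto x atTop (nhds 2) ∧
      (∀ c : ℝ, 0 ≤ c → c < 1 → ∀ γ : ℝ, 0 < γ →
        ∃ n : ℕ, γ * c ^ n < |x (n + 1) - 2|)) := by
  refine ⟨?_, ?_, fmap_two, ?_, ?_⟩
  · -- monotone
    intro x y _ hxy
    rcases eq_or_lt_of_le hxy with rfl | h
    · exact le_refl _
    · exact (fmap_strictMono h).le
  · -- scalable
    intro x hx l hl
    rcases eq_or_lt_of_le hx with rfl | hx'
    · -- x = 0
      rw [mul_zero]
      nlinarith [fmap_pos 0]
    · -- x > 0
      have hmem1 : x ∈ Set.Ici (0:ℝ) := le_of_lt hx'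
      have hmem2 : l * x ∈ Set.Ici (0:ℝ) := by
        simp only [Set.mem_Ici]; positivity
      have hlt : x < l * x := by nlinarith
      have hm : mfun x < mfun (l * x) := mfun_strictMonoOn hmem1 hmem2 hlt
      unfold mfun at hm
      have hkey : 1 + Real.exp (2 - x) < l * (1 + Real.exp (2 - l * x)) := by
        have := one_add_exp_pos (l * x)
        have := one_add_exp_pos x
        nlinarith
      unfold fmap
      have hre : l * (4 / (1 + Real.exp (2 - x))) = (4 * l) / (1 + Real.exp (2 - x)) := by
        ring
      rw [hre, div_lt_div_iff₀ (one_add_exp_pos (l * x)) (one_add_exp_pos x)]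
      nlinarith [one_add_exp_pos (l * x), one_add_exp_pos x]
  · -- unique fixed point
    intro x hx hfix
    exact fmap_fixed_unique hx hfix
  · -- iteration
    intro x hx0 hrec
    have hgt : ∀ n, 2 < x n := by
      intro n
      induction n with
      | zero => exact hx0
      | succ n ih => rw [hrec]; exact fmap_gt_two ih
    have hanti : Antitone x := by
      apply antitone_nat_of_succ_le
      intro n
      rw [hrec]
      exact (fmap_lt_self (hgt n)).le
    have hbdd : BddBelow (Set.range x) := by
      refine ⟨2, ?_⟩
      rintro y ⟨n, rfl⟩
      exact (hgt n).le
    have ht0 : Tendsto x atTop (nhds (⨅ n, x n)) := tendsto_atTop_ciInf hanti hbdd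
    set L := ⨅ n, x n with hLdef
    have hL2 : 2 ≤ L := le_ciInf fun n => (hgt n).le
    have hfixL : fmap L = L := by
      have h1 : Tendsto (fun n => x (n + 1)) atTop (nhds L) :=
        ht0.comp (tendsto_add_atTop_nat 1)
      have h2 : Tendsto (fun n => fmap (x n)) atTop (nhds (fmap L)) :=
        (fmap_continuous.tendsto L).comp ht0
      have heq : (fun n => x (n + 1)) = fun n => fmap (x n) := funext hrec
      rw [heq] at h1
      exact tendsto_nhds_unique h2 h1
    have hLeq : L = 2 := fmap_fixed_unique (by linarith) hfixL
    rw [hLeq] at ht0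
    refine ⟨ht0, ?_⟩
    intro c hc0 hc1 γ hγ
    by_contra hcon
    push_neg at hcon
    -- hcon : ∀ n, |x (n+1) - 2| ≤ γ * c ^ n
    have he : ∀ n, x (n + 1) - 2 ≤ γ * c ^ n := by
      intro n
      exact (le_abs_self _).trans (hcon n)
    -- find N₀ with tail ≤ 1/2
    obtain ⟨N₀, hN₀⟩ := Metric.tendsto_atTop.mp ht0 (1/2) (by norm_num)
    set N := N₀ + 1 with hNdef
    have hsmall : ∀ m, N ≤ m → x m - 2 ≤ 1/2 := by
      intro m hm
      have := hN₀ m (by omega)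
      rw [Real.dist_eq] at this
      have := (abs_lt.mp this).2
      linarith
    -- the key lower bound by induction
    have hkey : ∀ n, (x N - 2) *
        Real.exp (-(2 * γ * c ^ N₀ * ∑ k ∈ Finset.range n, c ^ k)) ≤ x (N + n) - 2 := by
      intro n
      induction n with
      | zero => simp
      | succ n ih =>
        set t := x (N + n) - 2 with htdef
        have ht0' : 0 < t := by have := hgt (N + n); linarith
        have htle : t ≤ 1/2 := hsmall (N + n) (by omega)
        have htb : t ≤ γ * c ^ (N₀ + n) := by
          have := he (N₀ + n)
          have hidx : N₀ + n + 1 = N + n := by omega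
          rw [hidx] at this
          exact this
        -- step: x (N+n+1) - 2 ≥ t (1 - t) ≥ t exp(-2t)
        have hstep : t * Real.exp (-(2 * t)) ≤ x (N + n + 1) - 2 := by
          have h1 : 2 + (t - t ^ 2) ≤ fmap (2 + t) :=
            fmap_quad_lb ht0'.le (by linarith)
          have h2 : x (N + n + 1) = fmap (2 + t) := by
            rw [hrec]
            congr 1
            rw [htdef]; ring
          have h3 : t * Real.exp (-(2 * t)) ≤ t * (1 - t) :=
            mul_le_mul_of_nonneg_left (exp_neg_two_le ht0'.le htle) ht0'.le
          nlinarith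
        have hexp : Real.exp (-(2 * t)) ≥ Real.exp (-(2 * γ * c ^ N₀ * c ^ n)) := by
          apply Real.exp_le_exp.mpr
          have : γ * c ^ (N₀ + n) = γ * c ^ N₀ * c ^ n := by rw [pow_add]; ring
          rw [this] at htb
          linarith
        have hlow : (x N - 2) * Real.exp (-(2 * γ * c ^ N₀ * ∑ k ∈ Finset.range n, c ^ k))
            * Real.exp (-(2 * γ * c ^ N₀ * c ^ n)) ≤ t * Real.exp (-(2 * t)) := by
          apply mul_le_mul ih hexp (Real.exp_pos _).le ht0'.le
        have hcomb : (x N - 2) *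
            Real.exp (-(2 * γ * c ^ N₀ * ∑ k ∈ Finset.range (n + 1), c ^ k))
            = (x N - 2) * Real.exp (-(2 * γ * c ^ N₀ * ∑ k ∈ Finset.range n, c ^ k))
            * Real.exp (-(2 * γ * c ^ N₀ * c ^ n)) := by
          rw [Finset.sum_range_succ,
            show -(2 * γ * c ^ N₀ * (∑ k ∈ Finset.range n, c ^ k + c ^ n))
              = -(2 * γ * c ^ N₀ * ∑ k ∈ Finset.range n, c ^ k)
                + -(2 * γ * c ^ N₀ * c ^ n) by ring,
            Real.exp_add]
          ring
        have hidx2 : N + (n + 1) = N + n + 1 := by omega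
        rw [hidx2, hcomb]
        linarith
    -- uniform positive lower bound
    set K := (x N - 2) * Real.exp (-(2 * γ * c ^ N₀ * (1 / (1 - c)))) with hKdef
    have hK : 0 < K := by
      have := hgt N
      exact mul_pos (by linarith) (Real.exp_pos _)
    have hlb : ∀ n, K ≤ x (N + n) - 2 := by
      intro n
      refine le_trans ?_ (hkey n)
      rw [hKdef]
      apply mul_le_mul_of_nonneg_left _ (by have := hgt N; linarith)
      apply Real.exp_le_exp.mpr
      have hsum := geom_sum_bound hc0 hc1 n
      have hfac : (0:ℝ) ≤ 2 * γ * c ^ N₀ := by positivity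
      nlinarith
    -- contradiction with convergence
    obtain ⟨M, hM⟩ := Metric.tendsto_atTop.mp ht0 K hK
    have h1 := hlb M
    have h2 := hM (N + M) (by omega)
    rw [Real.dist_eq] at h2
    have h3 := (abs_lt.mp h2).2
    linarith
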